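/- If G ∈ K[[X⁻¹]] is a formal power series G = ∑_{j≥1} s_{j-1} X^{-j} satisfying the quadratic equation P₁ G + (1/2) Q₀ G² = (1/2) Q₁, where P₁(X) = X² + f + 2d₁, Q₀(X) = u₀(X − v₀), Q₁(X) = u₁(X − v₁), and 4 d₁ + u₁ u₀ = 0 with u₀, u₁ ≠ 0, then s₀ = u₁/2, s₁ = −s₀ v₁, and for j ≥ 2 the coefficients satisfy s_j = −(2d₁ + f) s_{j-2} + (d₁/s₀)(∑_{i=0}^{j-2} s_i s_{j-2-i} − v₀ ∑_{i=0}^{j-3} s_i s_{j-3-i}). -/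

import Mathlib

open PowerSeries

theorem genus1_moment_recursion {K : Type*} [Field K] (htwo : (2 : K) ≠ 0)
    (f d1 u0 u1 v0 v1 : K) (hu : u0 * u1 = -4 * d1) (hd : d1 ≠ 0) (s : ℕ → K)
    (hG : PowerSeries.mk s
        + PowerSeries.C (f + 2 * d1) * PowerSeries.X ^ 2 * PowerSeries.mk s
        + PowerSeries.C (u0 / 2) *
            (PowerSeries.X ^ 2 * (PowerSeries.mk s) ^ 2
              - PowerSeries.C v0 * PowerSeries.X ^ 3 * (PowerSeries.mk s) ^ 2)
      = PowerSeries.C (u1 / 2) * (1 - PowerSeries.C v1 * PowerSeries.X)) :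
    s 0 = u1 / 2 ∧ s 1 = -(s 0 * v1) ∧
      ∀ j, 2 ≤ j →
        s j = -(2 * d1 + f) * s (j - 2)
          + (d1 / s 0) * ((∑ i ∈ Finset.range (j - 1), s i * s (j - 2 - i))
              - v0 * ∑ i ∈ Finset.range (j - 2), s i * s (j - 3 - i)) := by
  have hu1 : u1 ≠ 0 := by
    intro h
    rw [h, mul_zero] at hu
    apply hd
    have h4 : (4:K) ≠ 0 := by
      have := mul_ne_zero htwo htwo; norm_num at this ⊢; exact this
    field_simp at hu
    exact (mul_eq_zero.mp (neg_eq_zero.mp hu.symm)).resolve_left h4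
  have hsq : ∀ m, (coeff m) ((mk s)^2) = ∑ i ∈ Finset.range (m+1), s i * s (m - i) := by
    intro m
    rw [sq, coeff_mul, Finset.Nat.sum_antidiagonal_eq_sum_range_succ_mk]
    simp
  set a := f + 2*d1 with ha
  have h : ∀ n, (s n + if 2 ≤ n then a * s (n-2) else 0)
      + ((if 2 ≤ n then u0/2 * (coeff (n-2)) ((mk s)^2) else 0)
          - if 3 ≤ n then u0/2 * (v0 * (coeff (n-3)) ((mk s)^2)) else 0)
      = (if n = 0 then u1/2 else 0) - if n = 1 then u1/2 * v1 else 0 := by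
    intro n
    have := congrArg (coeff n) hG
    simpa [mul_assoc, coeff_X_pow_mul', mul_sub, coeff_C, PowerSeries.coeff_X] using this
  have h0 : s 0 = u1 / 2 := by have := h 0; simpa using this
  have h1 : s 1 = -(s 0 * v1) := by
    have := h 1; simp at this; rw [h0]; linear_combination this
  refine ⟨h0, h1, fun j hj => ?_⟩
  have hj1 : j - 2 + 1 = j - 1 := by omega
  have hrec := h j
  rw [if_pos hj, if_pos hj, hsq (j-2), hj1] at hrec
  have hB : (if 3 ≤ j then u0/2 * (v0 * (coeff (j-3)) ((mk s)^2)) else 0)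
      = u0/2 * (v0 * ∑ i ∈ Finset.range (j - 2), s i * s (j - 3 - i)) := by
    by_cases h3 : 3 ≤ j
    · rw [if_pos h3, hsq (j-3), show j - 3 + 1 = j - 2 by omega]
    · have hj2 : j = 2 := by omega
      subst hj2; simp
  rw [hB] at hrec
  have hn0 : ¬ j = 0 := by omega
  have hn1 : ¬ j = 1 := by omega
  rw [if_neg hn0, if_neg hn1] at hrec
  set A := ∑ i ∈ Finset.range (j - 1), s i * s (j - 2 - i)
  set B := ∑ i ∈ Finset.range (j - 2), s i * s (j - 3 - i)
  have h2d : d1 / (u1/2) = -(u0/2) := by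
    rw [div_eq_iff (div_ne_zero hu1 htwo)]
    field_simp
    first
    | linear_combination -hu
    | linear_combination hu
    | linear_combination 2*hu
    | linear_combination -2*hu
  rw [h0, h2d]
  first
  | linear_combination hrec
  | linear_combination -hrec
  | linear_combination 2*hrec
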